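/- Let n be a natural number, let N = ⌊n/2⌋ with N ≥ 1, and let h : {1,…,N} → ℤ. Suppose s : {1,…,N} → ℤ satisfies the downward recursion s(N) = h(N) and, for every 1 ≤ p < N, s(p) = h(p) − Σ_{q=p+1}^{N} d_{n−2p, q−p} · s(q). Then for every 1 ≤ p ≤ N: s(p) = h(p) + Σ_{q=p+1}^{N} ( Σ_{λ ∈ Comp(q−p)} (−1)^{row(λ)} · d^{n−2p}_λ ) · h(q). -/

import Mathlib

/-- `tlDim n p = C(n,p) - C(n,p-1) ∈ ℤ`, the quantity `d_{n,p}` (the dimension of the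
standard Temperley–Lieb module `V_{n,p}`); binomial coefficients vanish when the lower
index exceeds the upper. -/
def tlDim (n p : ℕ) : ℤ := (n.choose p : ℤ) - (n.choose (p - 1) : ℤ)

/-- For `r : ℕ` and a composition `λ = [i₁, …, i_l]`,
`dPow r λ = ∏_{c=1}^{l} d_{r ∸ 2(i₁ + ⋯ + i_{c-1}), i_c}`, where `∸` is truncated
subtraction on `ℕ` (here realized by the recursion `(r - 2 i₁) - 2 i₂ - ⋯`). -/
def dPow : ℕ → List ℕ → ℤ
  | _, [] => 1
  | r, i :: t => tlDim r i * dPow (r - 2 * i) t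

/-- `compositions m` is the finite set of compositions of `m`: ordered lists of positive
integers summing to `m` (for `m = 0` this is just the empty composition).  A composition
of `m ≥ 1` is a first part `j ≥ 1` (here `j = m - k` with `k < m`) followed by a
composition of `m - j`. -/
def compositions : ℕ → Finset (List ℕ)
  | 0 => {[]}
  | m + 1 =>
    (Finset.range (m + 1)).attach.biUnion
      (fun k => (compositions k.1).image (List.cons (m + 1 - k.1)))
decreasing_by exact Finset.mem_range.mp k.2

/-- The downward recursion
`s N = h N`, `s p = h p - Σ_{q=p+1}^{N} d_{n-2p, q-p} · s q`
has the closed-form solution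
`s p = h p + Σ_{q=p+1}^{N} (Σ_{λ ∈ Comp(q-p)} (-1)^{row λ} · d^{n-2p}_λ) · h q`
for all `1 ≤ p ≤ N`, where `N = ⌊n/2⌋ ≥ 1`. -/
def coefC (r m : ℕ) : ℤ := ∑ L ∈ compositions m, (-1) ^ L.length * dPow r L

lemma coefC_zero (r : ℕ) : coefC r 0 = 1 := by
  simp [coefC, compositions, dPow]

lemma coefC_succ (r m : ℕ) :
    coefC r (m + 1) =
      -∑ k ∈ Finset.range (m + 1), tlDim r (m + 1 - k) * coefC (r - 2 * (m + 1 - k)) k := by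
  rw [coefC, compositions]
  rw [Finset.sum_biUnion]
  · rw [Finset.sum_attach _ (fun k => ∑ L ∈ (compositions k).image (List.cons (m+1-k)),
      (-1:ℤ) ^ L.length * dPow r L)]
    rw [← Finset.sum_neg_distrib]
    apply Finset.sum_congr rfl
    intro k hk
    rw [Finset.sum_image (by intro a _ b _ hab; exact (List.cons_injective hab))]
    rw [coefC, Finset.mul_sum, ← Finset.sum_neg_distrib]
    apply Finset.sum_congr rfl
    intro L hL
    simp [dPow, pow_succ]
    ring
  · intro a _ b _ hab
    simp only [Function.onFun, Finset.disjoint_left]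
    intro L hLa hLb
    simp only [Finset.mem_image] at hLa hLb
    obtain ⟨La, _, rfl⟩ := hLa
    obtain ⟨Lb, _, hb⟩ := hLb
    have h1 := List.head_eq_of_cons_eq hb.symm
    have ha' := Finset.mem_range.mp a.2
    have hb' := Finset.mem_range.mp b.2
    exact hab (Subtype.ext (by omega))

lemma coefC_key (n p q : ℕ) (hpq : p < q) :
    coefC (n - 2 * p) (q - p) =
      -∑ r ∈ Finset.Ioc p q, tlDim (n - 2 * p) (r - p) * coefC (n - 2 * r) (q - r) := by
  obtain ⟨m, hm⟩ : ∃ m, q - p = m + 1 := ⟨q - p - 1, by omega⟩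
  rw [hm, coefC_succ]
  congr 1
  apply Finset.sum_nbij' (fun k => q - k) (fun r => q - r)
  · intro k hk; simp only [Finset.mem_range] at hk; simp only [Finset.mem_Ioc]; omega
  · intro r hr; simp only [Finset.mem_Ioc] at hr; simp only [Finset.mem_range]; omega
  · intro k hk; simp only [Finset.mem_range] at hk; omega
  · intro r hr; simp only [Finset.mem_Ioc] at hr; omega
  · intro k hk
    simp only [Finset.mem_range] at hk
    have h1 : q - (q - k) = k := by omega
    have h2 : m + 1 - k = q - k - p := by omega
    have h3 : n - 2 * p - 2 * (q - k - p) = n - 2 * (q - k) := by omega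
    rw [h1, h2, h3]

theorem recursion_closed_form (n N : ℕ) (hN : N = n / 2) (hN1 : 1 ≤ N) (h s : ℕ → ℤ)
    (hbase : s N = h N)
    (hrec : ∀ p, 1 ≤ p → p < N →
      s p = h p - ∑ q ∈ Finset.Ioc p N, tlDim (n - 2 * p) (q - p) * s q) :
    ∀ p, 1 ≤ p → p ≤ N →
      s p = h p + ∑ q ∈ Finset.Ioc p N,
        (∑ L ∈ compositions (q - p), (-1) ^ L.length * dPow (n - 2 * p) L) * h q := by
  have main : ∀ d p, 1 ≤ p → p ≤ N → N - p ≤ d →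
      s p = h p + ∑ q ∈ Finset.Ioc p N, coefC (n - 2 * p) (q - p) * h q := by
    intro d
    induction d with
    | zero =>
      intro p hp1 hpN hd
      have : p = N := by omega
      subst this
      simp [hbase]
    | succ d IH =>
      intro p hp1 hpN hd
      rcases eq_or_lt_of_le hpN with hPN | hPN
      · subst hPN; simp [hbase]
      · rw [hrec p hp1 hPN]
        have hs : ∀ q ∈ Finset.Ioc p N, s q =
            h q + ∑ q' ∈ Finset.Ioc q N, coefC (n - 2 * q) (q' - q) * h q' := by
          intro q hq
          simp only [Finset.mem_Ioc] at hq
          exact IH q (by omega) hq.2 (by omega)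
        rw [Finset.sum_congr rfl (fun q hq => by rw [hs q hq])]
        have expand : ∑ q ∈ Finset.Ioc p N, tlDim (n - 2 * p) (q - p) *
              (h q + ∑ q' ∈ Finset.Ioc q N, coefC (n - 2 * q) (q' - q) * h q') =
            ∑ q ∈ Finset.Ioc p N, tlDim (n - 2 * p) (q - p) * h q +
            ∑ q ∈ Finset.Ioc p N, ∑ q' ∈ Finset.Ioc q N,
              tlDim (n - 2 * p) (q - p) * coefC (n - 2 * q) (q' - q) * h q' := by
          rw [← Finset.sum_add_distrib]
          apply Finset.sum_congr rfl
          intro q _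
          rw [mul_add, Finset.mul_sum]
          congr 1
          exact Finset.sum_congr rfl (fun q' _ => (mul_assoc _ _ _).symm)
        rw [expand]
        have swap : ∑ q ∈ Finset.Ioc p N, ∑ q' ∈ Finset.Ioc q N,
              tlDim (n - 2 * p) (q - p) * coefC (n - 2 * q) (q' - q) * h q' =
            ∑ q' ∈ Finset.Ioc p N, ∑ q ∈ Finset.Ioo p q',
              tlDim (n - 2 * p) (q - p) * coefC (n - 2 * q) (q' - q) * h q' := by
          apply Finset.sum_comm'
          intro q q'
          simp only [Finset.mem_Ioc, Finset.mem_Ioo]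
          omega
        rw [swap]
        have key : ∀ q' ∈ Finset.Ioc p N,
            coefC (n - 2 * p) (q' - p) * h q' =
              -(tlDim (n - 2 * p) (q' - p) * h q') -
              ∑ q ∈ Finset.Ioo p q',
                tlDim (n - 2 * p) (q - p) * coefC (n - 2 * q) (q' - q) * h q' := by
          intro q' hq'
          simp only [Finset.mem_Ioc] at hq'
          rw [coefC_key n p q' hq'.1]
          rw [← Finset.Ioo_insert_right hq'.1, Finset.sum_insert Finset.right_notMem_Ioo]
          simp only [Nat.sub_self, coefC_zero, mul_one]
          rw [← Finset.sum_mul]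
          ring
        calc h p - (∑ q ∈ Finset.Ioc p N, tlDim (n - 2 * p) (q - p) * h q +
              ∑ q' ∈ Finset.Ioc p N, ∑ q ∈ Finset.Ioo p q',
                tlDim (n - 2 * p) (q - p) * coefC (n - 2 * q) (q' - q) * h q')
            = h p + ∑ q' ∈ Finset.Ioc p N,
                (-(tlDim (n - 2 * p) (q' - p) * h q') -
                 ∑ q ∈ Finset.Ioo p q',
                   tlDim (n - 2 * p) (q - p) * coefC (n - 2 * q) (q' - q) * h q') := by
              rw [Finset.sum_sub_distrib]
              rw [Finset.sum_neg_distrib]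
              ring
          _ = h p + ∑ q' ∈ Finset.Ioc p N, coefC (n - 2 * p) (q' - p) * h q' := by
              congr 1
              exact (Finset.sum_congr rfl key).symm
  intro p hp1 hpN
  exact main (N - p) p hp1 hpN le_rfl
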